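/- Let (L, v) be a complete discretely valued skew field with uniformizer σ, and let g₁,…,g_k ∈ L[t] be monic nonconstant polynomials whose Newton polygons have only positive slopes. Let M be a left L[t]-module isomorphic to ⊕ᵢ L[t]/gᵢL[t], and Λ an O-lattice in M. Then there exists n₀ ∈ ℕ such that tⁿΛ ⊇ σ⁻¹Λ for all n ≥ n₀. -/

import Mathlib

/-- The valuation of a coefficient, as an extended real number. -/
noncomputable def evv {L : Type*} (v : L → WithTop ℤ) (x : L) : EReal :=
  WithTop.recTopCoe ⊤ (fun n : ℤ => ((n : ℝ) : EReal)) (v x)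

/-- The Newton polygon (lower convex hull function) of a polynomial. -/
noncomputable def NP {L : Type*} [DivisionRing L] (v : L → WithTop ℤ)
    (f : Polynomial L) (x : ℝ) : EReal :=
  sSup {y : EReal | ∃ a b : ℝ,
    (∀ i ∈ f.support, ((a * i + b : ℝ) : EReal) ≤ evv v (f.coeff i)) ∧
    y = ((a * x + b : ℝ) : EReal)}

open Polynomial

private lemma exists_lb' {ι : Type*} (s : Finset ι) (f : ι → WithTop ℤ) :
    ∃ c : ℤ, ∀ i ∈ s, (c : WithTop ℤ) ≤ f i := by
  classical
  induction s using Finset.induction_on with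
  | empty => exact ⟨0, by simp⟩
  | @insert a s ha ih =>
    obtain ⟨c, hc⟩ := ih
    cases hfa : f a with
    | top =>
      refine ⟨c, fun i hi => ?_⟩
      rcases Finset.mem_insert.1 hi with rfl | hi
      · simp [hfa]
      · exact hc i hi
    | coe z =>
      refine ⟨min c z, fun i hi => ?_⟩
      rcases Finset.mem_insert.1 hi with rfl | hi
      · rw [hfa]; exact_mod_cast min_le_right c z
      · exact le_trans (by exact_mod_cast min_le_left c z) (hc i hi)

private lemma exists_ub_int {ι : Type*} (s : Finset ι) (f : ι → ℤ) :
    ∃ A : ℤ, ∀ i ∈ s, f i ≤ A := by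
  classical
  induction s using Finset.induction_on with
  | empty => exact ⟨0, by simp⟩
  | @insert a s ha ih =>
    obtain ⟨A, hA⟩ := ih
    refine ⟨max A (f a), fun i hi => ?_⟩
    rcases Finset.mem_insert.1 hi with rfl | hi
    · exact le_max_right _ _
    · exact le_trans (hA i hi) (le_max_left _ _)

private lemma exists_uniform_N {ι : Type*} (s : Finset ι) (P : ι → ℕ → Prop)
    (hmono : ∀ i N N', N ≤ N' → P i N → P i N') (h : ∀ i ∈ s, ∃ N, P i N) :
    ∃ N, ∀ i ∈ s, P i N := by
  classical
  induction s using Finset.induction_on with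
  | empty => exact ⟨0, by simp⟩
  | @insert a s ha ih =>
    obtain ⟨N, hN⟩ := ih fun i hi => h i (Finset.mem_insert_of_mem hi)
    obtain ⟨Na, hNa⟩ := h a (Finset.mem_insert_self a s)
    refine ⟨max N Na, fun i hi => ?_⟩
    rcases Finset.mem_insert.1 hi with rfl | hi
    · exact hmono i Na _ (le_max_right _ _) hNa
    · exact hmono i N _ (le_max_left _ _) (hN i hi)

private lemma v_sum_le {L : Type*} [DivisionRing L] (v : L → WithTop ℤ)
    (h0 : v 0 = ⊤) (hadd : ∀ x y : L, min (v x) (v y) ≤ v (x + y))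
    {κ : Type*} (s : Finset κ) (x : κ → L) (c : WithTop ℤ)
    (h : ∀ i ∈ s, c ≤ v (x i)) : c ≤ v (∑ i ∈ s, x i) := by
  classical
  induction s using Finset.induction_on with
  | empty => simp [h0]
  | @insert a s ha ih =>
    rw [Finset.sum_insert ha]
    refine le_trans ?_ (hadd _ _)
    exact le_min (h a (Finset.mem_insert_self a s))
      (ih fun i hi => h i (Finset.mem_insert_of_mem hi))

/-- Let `g₁, …, g_k` be monic nonconstant polynomials whose Newton polygons have only
positive slopes (i.e. start at `x = 0` and are strictly increasing up to the degree),
let `M ≅ ⊕ᵢ L[t]/L[t]gᵢ`, and let `Λ` be an `O`-lattice in `M`.  Then there is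
`n₀ ∈ ℕ` with `tⁿΛ ⊇ σ⁻¹Λ` for all `n ≥ n₀`. -/
theorem stmt17 {L M : Type*} [DivisionRing L]
    [AddCommGroup M] [Module (Polynomial L) M] [Module L M]
    (hcompat : ∀ (a : L) (m : M), a • m = (Polynomial.C a : Polynomial L) • m)
    (v : L → WithTop ℤ)
    (hv0 : ∀ x : L, v x = ⊤ ↔ x = 0)
    (hadd : ∀ x y : L, min (v x) (v y) ≤ v (x + y))
    (hmul : ∀ x y : L, v (x * y) = v x + v y)
    (hcomplete : ∀ x : ℕ → L,
      (∀ M' : ℤ, ∃ N : ℕ, ∀ n ≥ N, (M' : WithTop ℤ) ≤ v (x n)) →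
      ∃ t : L, ∀ M' : ℤ, ∃ N : ℕ, ∀ n ≥ N,
        (M' : WithTop ℤ) ≤ v (t - ∑ i ∈ Finset.range n, x i))
    (O : Subring L) (hO : (O : Set L) = {x : L | 0 ≤ v x})
    (σ : L) (hσ : v σ = 1)
    (k : ℕ) (g : Fin k → Polynomial L)
    (hmonic : ∀ i, (g i).Monic) (hdeg : ∀ i, 0 < (g i).natDegree)
    (hpos : ∀ i, (g i).coeff 0 ≠ 0 ∧
      ∀ x y : ℝ, 0 ≤ x → x < y → y ≤ ((g i).natDegree : ℝ) →
        NP v (g i) x < NP v (g i) y)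
    (hiso : Nonempty (M ≃ₗ[Polynomial L]
      (∀ i : Fin k, Polynomial L ⧸ Submodule.span (Polynomial L) {g i})))
    (Λ : Submodule ↥O M) (hfg : Λ.FG)
    (hbasis : ∃ (n : ℕ) (b : Module.Basis (Fin n) L M), ∀ i, b i ∈ Λ) :
    ∃ n₀ : ℕ, ∀ n ≥ n₀,
      (fun m : M => σ⁻¹ • m) '' (Λ : Set M) ⊆
        (fun m : M => ((Polynomial.X : Polynomial L) ^ n) • m) '' (Λ : Set M) := by
  classical
  obtain ⟨e⟩ := hiso
  -- trivial case k = 0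
  rcases Nat.eq_zero_or_pos k with hk | hk
  · subst hk
    have hzero : ∀ m : M, m = 0 := by
      intro m
      have : e m = e 0 := funext fun i => i.elim0
      exact e.injective this
    refine ⟨0, fun n _ y hy => ?_⟩
    obtain ⟨m, hm, rfl⟩ := hy
    exact ⟨0, Λ.zero_mem, by simp [hzero m]⟩
  obtain ⟨nb, b, hbΛ⟩ := hbasis
  haveI : Module.Finite L M := Module.Finite.of_basis b
  -- basic valuation facts
  have hv0' : v 0 = ⊤ := (hv0 0).2 rfl
  have v1 : v 1 = (0 : ℤ) := by
    have h1 : v 1 ≠ ⊤ := fun h => one_ne_zero ((hv0 1).1 h)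
    have := hmul 1 1
    rw [one_mul] at this
    cases hv1 : v (1 : L) with
    | top => exact absurd hv1 h1
    | coe z =>
      rw [hv1] at this
      have : z = z + z := by exact_mod_cast this
      have : z = 0 := by omega
      simp [this]
  have vneg : ∀ x : L, v (-x) = v x := by
    have hm1 : v (-1 : L) = (0 : ℤ) := by
      have := hmul (-1) (-1)
      rw [neg_one_mul, neg_neg, v1] at this
      cases hv1 : v (-1 : L) with
      | top => rw [hv1] at this; simp at this
      | coe z =>
        rw [hv1] at this
        have : (0 : ℤ) = z + z := by exact_mod_cast this
        have : z = 0 := by omega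
        simp [hv1, this]
    intro x
    rw [← neg_one_mul, hmul, hm1]
    simp
  have memO : ∀ x : L, x ∈ O ↔ (0 : WithTop ℤ) ≤ v x := by
    intro x
    have : x ∈ (O : Set L) ↔ x ∈ {x : L | 0 ≤ v x} := by rw [hO]
    simpa using this
  have smulΛ : ∀ (x : L) (m : M), (0 : WithTop ℤ) ≤ v x → m ∈ Λ → x • m ∈ Λ := by
    intro x m hx hm
    exact Λ.smul_mem (⟨x, (memO x).2 hx⟩ : ↥O) hm
  have hσ0 : σ ≠ 0 := fun h => by rw [h, hv0'] at hσ; exact absurd hσ (by simp)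
  have vinv : ∀ x : L, x ≠ 0 → ∀ z : ℤ, v x = z → v x⁻¹ = (-z : ℤ) := by
    intro x hx z hz
    have h := hmul x⁻¹ x
    rw [inv_mul_cancel₀ hx, v1, hz] at h
    cases hvi : v x⁻¹ with
    | top => rw [hvi] at h; simp at h
    | coe u =>
      rw [hvi] at h
      have : (0 : ℤ) = u + z := by exact_mod_cast h
      have : u = -z := by omega
      exact_mod_cast this
  have vσinv : v σ⁻¹ = ((-1 : ℤ) : WithTop ℤ) := vinv σ hσ0 1 hσ
  -- the sigma-twisted lattice
  have conjO : ∀ (x : L) (o : L), (0:WithTop ℤ) ≤ v o → x ≠ 0 → (0:WithTop ℤ) ≤ v (x⁻¹ * o * x) := by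
    intro x o ho hx
    cases hvx : v x with
    | top => exact absurd ((hv0 x).1 hvx) hx
    | coe z =>
      rw [hmul, hmul, vinv x hx z hvx, hvx]
      cases hvo : v o with
      | top => simp
      | coe u =>
        rw [hvo] at ho
        have hu : (0:ℤ) ≤ u := by exact_mod_cast ho
        have hcast : ((-z : ℤ) : WithTop ℤ) + (u:ℤ) + (z:ℤ) = ((-z + u + z : ℤ) : WithTop ℤ) := by
          push_cast; ring
        rw [hcast]
        exact_mod_cast (by omega : (0:ℤ) ≤ -z + u + z)
  let Λσ : Submodule ↥O M :=
    { carrier := {m : M | σ⁻¹ • m ∈ Λ}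
      add_mem' := by intro a b ha hb; simp only [Set.mem_setOf_eq, smul_add] at *; exact Λ.add_mem ha hb
      zero_mem' := by simp only [Set.mem_setOf_eq, smul_zero]; exact Λ.zero_mem
      smul_mem' := by
        intro o m hm
        simp only [Set.mem_setOf_eq] at *
        have h1 : σ⁻¹ • ((o : L) • m) = (σ⁻¹ * (o:L) * σ) • (σ⁻¹ • m) := by
          rw [smul_smul, smul_smul]
          congr 1
          rw [mul_assoc _ σ, mul_inv_cancel₀ hσ0, mul_one]
        have ho : (0:WithTop ℤ) ≤ v (o:L) := (memO _).1 o.2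
        show σ⁻¹ • ((o : L) • m) ∈ Λ
        rw [h1]
        exact smulΛ _ _ (conjO σ _ ho hσ0) hm }
  have memΛσ : ∀ m : M, m ∈ Λσ ↔ σ⁻¹ • m ∈ Λ := fun m => Iff.rfl
  -- the multiplication-by-X endomorphism
  let T : M →ₗ[L] M :=
    { toFun := fun m => (X : Polynomial L) • m
      map_add' := fun m m' => smul_add _ _ _
      map_smul' := fun a m => by
        simp only [RingHom.id_apply]
        rw [hcompat a m, hcompat a ((X : Polynomial L) • m), smul_smul, smul_smul, X_mul] }
  have Tdef : ∀ m : M, T m = (X : Polynomial L) • m := fun m => rfl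
  let d : Fin k → ℕ := fun i => (g i).natDegree
  let Φ : ∀ _ : Fin k, Polynomial L →ₗ[Polynomial L] M := fun i =>
    (e.symm.toLinearMap.comp
      (LinearMap.single (Polynomial L)
        (fun i : Fin k => Polynomial L ⧸ Submodule.span (Polynomial L) {g i}) i)).comp
      (Submodule.mkQ (Submodule.span (Polynomial L) {g i}))
  let c' : Fin k → ℕ → M := fun i j => Φ i (X ^ j)
  have hΦT : ∀ (i) (p : Polynomial L), T (Φ i p) = Φ i (X * p) := by
    intro i p
    show (X : Polynomial L) • (Φ i p) = Φ i (X * p)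
    rw [← smul_eq_mul, map_smul]
  have hTc' : ∀ i j, T (c' i j) = c' i (j+1) := by
    intro i j
    show T (Φ i (X ^ j)) = Φ i (X ^ (j+1))
    rw [hΦT, ← pow_succ']
  have hΦmk0 : ∀ (i) (p : Polynomial L), p ∈ Submodule.span (Polynomial L) {g i} →
      Φ i p = 0 := by
    intro i p hp
    show e.symm.toLinearMap (LinearMap.single (Polynomial L) _ i ((Submodule.mkQ _) p)) = 0
    have h1 : (Submodule.mkQ (Submodule.span (Polynomial L) {g i})) p = 0 := by
      rw [Submodule.mkQ_apply]
      exact (Submodule.Quotient.mk_eq_zero _).2 hp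
    rw [h1, map_zero, map_zero]
  have hΦeq : ∀ (i) (p q : Polynomial L), p - q ∈ Submodule.span (Polynomial L) {g i} →
      Φ i p = Φ i q := by
    intro i p q hpq
    have := hΦmk0 i (p - q) hpq
    rw [map_sub, sub_eq_zero] at this
    exact this
  -- the coordinate vectors
  let ιt := Σ i : Fin k, Fin ((g i).natDegree)
  let c : ιt → M := fun β => c' β.1 β.2
  have key : ∀ (i) (p : Polynomial L), p.natDegree < d i →
      Φ i p = ∑ j : Fin (d i), p.coeff j • c' i (j : ℕ) := by
    intro i p hp
    conv_lhs => rw [p.as_sum_range' (d i) hp]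
    rw [map_sum, ← Fin.sum_univ_eq_sum_range (fun j => Φ i ((monomial j) (p.coeff j))) (d i)]
    refine Finset.sum_congr rfl fun j _ => ?_
    rw [← C_mul_X_pow_eq_monomial, ← smul_eq_mul, map_smul, hcompat]
  have claim : ∀ (N : ℕ) (i : Fin k) (p : Polynomial L), p.natDegree ≤ N →
      Φ i p ∈ Submodule.span L (Set.range c) := by
    intro N
    induction N using Nat.strong_induction_on with
    | _ N ih =>
      intro i p hpN
      by_cases hlt : p.natDegree < d i
      · rw [key i p hlt]
        exact Submodule.sum_mem _ fun j _ => Submodule.smul_mem _ _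
          (Submodule.subset_span ⟨⟨i, j⟩, rfl⟩)
      · push_neg at hlt
        have hdn : d i ≤ p.natDegree := hlt
        have hd1 : 0 < d i := hdeg i
        set n := p.natDegree with hn
        have hmon : ((X : Polynomial L) ^ (n - d i) * g i).Monic :=
          (monic_X_pow _).mul (hmonic i)
        have hdeg2 : ((X : Polynomial L) ^ (n - d i) * g i).natDegree = n := by
          rw [natDegree_mul']
          · rw [natDegree_X_pow]
            have hdi : d i = (g i).natDegree := rfl
            omega
          · rw [leadingCoeff_X_pow, one_mul, (hmonic i).leadingCoeff]
            exact one_ne_zero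
        set r := C (p.coeff n) * ((X : Polynomial L) ^ (n - d i) * g i) with hr
        have hrmem : r ∈ Submodule.span (Polynomial L) {g i} := by
          rw [Submodule.mem_span_singleton]
          exact ⟨C (p.coeff n) * X ^ (n - d i), by rw [smul_eq_mul, mul_assoc]⟩
        have hcoeff : ∀ m : ℕ, n ≤ m → (p - r).coeff m = 0 := by
          intro m hm
          rcases eq_or_lt_of_le hm with rfl | hmlt
          · have h1 : ((X : Polynomial L) ^ (n - d i) * g i).coeff n = 1 := by
              nth_rewrite 2 [← hdeg2]
              exact hmon.coeff_natDegree
            rw [coeff_sub, hr, coeff_C_mul, h1, mul_one, sub_self]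
          · rw [coeff_sub, coeff_eq_zero_of_natDegree_lt (hn ▸ hmlt),
              coeff_eq_zero_of_natDegree_lt
                (lt_of_le_of_lt (le_trans (natDegree_C_mul_le _ _) hdeg2.le) hmlt),
              sub_self]
        have hΦpr : Φ i p = Φ i (p - r) :=
          hΦeq i p (p - r) (by rw [sub_sub_cancel]; exact hrmem)
        by_cases hq : p - r = 0
        · rw [hΦpr, hq, map_zero]; exact Submodule.zero_mem _
        · have hdlt : (p - r).natDegree < n := by
            rw [natDegree_lt_iff_degree_lt hq]
            exact (degree_lt_iff_coeff_zero _ _).2 fun m hm => hcoeff m hm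
          rw [hΦpr]
          exact ih (p - r).natDegree (by omega) i (p - r) le_rfl
  have hspan : ∀ m : M, m ∈ Submodule.span L (Set.range c) := by
    intro m
    have hm : m = ∑ i : Fin k, e.symm (Pi.single i (e m i)) := by
      rw [← map_sum, ← e.symm_apply_apply m]
      congr 1
      rw [e.apply_symm_apply]
      exact (Finset.univ_sum_single (e m)).symm
    rw [hm]
    refine Submodule.sum_mem _ fun i _ => ?_
    obtain ⟨p, hp⟩ := Submodule.mkQ_surjective _ (e m i)
    have : e.symm (Pi.single i (e m i)) = Φ i p := by
      show _ = e.symm.toLinearMap (LinearMap.single (Polynomial L) _ i ((Submodule.mkQ _) p))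
      rw [hp]
      rfl
    rw [this]
    exact claim p.natDegree i p le_rfl
  -- inverse images of monomial basis vectors
  let w : Fin k → Polynomial L := fun i => -(C ((g i).coeff 0)⁻¹ * (g i).divX)
  let chat : Fin k → M := fun i => Φ i (w i)
  have hXw : ∀ i, (X : Polynomial L) * w i - 1 = -(C ((g i).coeff 0)⁻¹ * g i) := by
    intro i
    have h1 : (X : Polynomial L) * (C ((g i).coeff 0)⁻¹ * (g i).divX)
        = C ((g i).coeff 0)⁻¹ * ((X : Polynomial L) * (g i).divX) := by
      rw [← mul_assoc, X_mul (p := C ((g i).coeff 0)⁻¹), mul_assoc]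
    show (X : Polynomial L) * -(C ((g i).coeff 0)⁻¹ * (g i).divX) - 1
        = -(C ((g i).coeff 0)⁻¹ * g i)
    rw [mul_neg, h1]
    have h2 : (X : Polynomial L) * (g i).divX = g i - C ((g i).coeff 0) :=
      eq_sub_of_add_eq (X_mul_divX_add (g i))
    rw [h2, mul_sub, ← C_mul, inv_mul_cancel₀ (hpos i).1, C_1]
    abel
  have hTchat : ∀ i, T (chat i) = c' i 0 := by
    intro i
    show T (Φ i (w i)) = Φ i (X ^ 0)
    rw [hΦT, pow_zero]
    apply hΦeq
    rw [hXw i]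
    exact Submodule.neg_mem _ (Submodule.mem_span_singleton.2
      ⟨C ((g i).coeff 0)⁻¹, by rw [smul_eq_mul]⟩)
  -- T is bijective
  have hTsurj : Function.Surjective T := by
    have hsub : Set.range c ⊆ (LinearMap.range T : Set M) := by
      rintro _ ⟨⟨i, j⟩, rfl⟩
      show c' i (j : ℕ) ∈ LinearMap.range T
      cases hj : (j : ℕ) with
      | zero => exact ⟨chat i, hTchat i⟩
      | succ j' => exact ⟨c' i j', hTc' i j'⟩
    intro m
    have hle : Submodule.span L (Set.range c) ≤ LinearMap.range T :=
      Submodule.span_le.2 hsub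
    exact hle (hspan m)
  have hTinj : Function.Injective T := (LinearMap.injective_iff_surjective).2 hTsurj
  let Teq : M ≃ₗ[L] M := LinearEquiv.ofBijective T ⟨hTinj, hTsurj⟩
  have Teqdef : ∀ m : M, Teq m = T m := fun _ => rfl
  let SL : ℕ → M →ₗ[L] M := fun n => (Teq.symm.toLinearMap) ^ n
  have SLdef0 : ∀ m : M, SL 0 m = m := fun _ => rfl
  have SLsucc : ∀ (n) (m : M), SL (n+1) m = SL n (Teq.symm m) := by
    intro n m
    show ((Teq.symm.toLinearMap) ^ (n+1)) m = _
    rw [pow_succ]; rfl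
  have SLsucc' : ∀ (n) (m : M), SL (n+1) m = Teq.symm (SL n m) := by
    intro n m
    show ((Teq.symm.toLinearMap) ^ (n+1)) m = _
    rw [pow_succ']; rfl
  have SLadd : ∀ (a b) (m : M), SL (a+b) m = SL a (SL b m) := by
    intro a b m
    show ((Teq.symm.toLinearMap) ^ (a+b)) m = _
    rw [pow_add]; rfl
  have hXSL : ∀ (n) (m : M), ((X : Polynomial L) ^ n) • SL n m = m := by
    intro n
    induction n with
    | zero => intro m; rw [pow_zero, SLdef0, one_smul]
    | succ n ih =>
      intro m
      rw [SLsucc n m, pow_succ', mul_smul, ih (Teq.symm m), ← Tdef, ← Teqdef,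
        Teq.apply_symm_apply]
  have hSc' : ∀ i j, Teq.symm (c' i (j+1)) = c' i j := by
    intro i j
    apply Teq.injective
    rw [Teq.apply_symm_apply, Teqdef, hTc']
  have hSchat : ∀ i, Teq.symm (c' i 0) = chat i := by
    intro i
    apply Teq.injective
    rw [Teq.apply_symm_apply, Teqdef, hTchat]
  -- Newton polygon input
  have hNP : ∀ (i) (j : ℕ), 1 ≤ j → j ≤ d i →
      v ((g i).coeff 0) + 1 ≤ v ((g i).coeff j) := by
    intro i j hj1 hjd
    obtain ⟨ha0, hstrict⟩ := hpos i
    cases hz0 : v ((g i).coeff 0) with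
    | top => exact absurd ((hv0 _).1 hz0) ha0
    | coe z₀ =>
    by_cases hcj : (g i).coeff j = 0
    · rw [(hv0 _).2 hcj]; exact le_top
    have hjsup : j ∈ (g i).support := mem_support_iff.2 hcj
    cases hzj : v ((g i).coeff j) with
    | top => exact le_top
    | coe zj =>
    let F : ℕ → ℤ := fun m => (WithTop.untopD 0 (v ((g i).coeff m)))
    have hFv : ∀ m ∈ (g i).support, evv v ((g i).coeff m) = (((F m : ℤ) : ℝ) : EReal) := by
      intro m hm
      cases hzm : v ((g i).coeff m) with
      | top => exact absurd ((hv0 _).1 hzm) (mem_support_iff.1 hm)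
      | coe zm => rw [evv, hzm]; simp [F, hzm]
    have hF0 : F 0 = z₀ := by simp [F, hz0]
    have hFj : F j = zj := by simp [F, hzj]
    have h0sup : 0 ∈ (g i).support := mem_support_iff.2 ha0
    set a : ℝ := ((g i).support.inf' ⟨0, h0sup⟩
      fun m => if m = 0 then 0 else (((F m : ℤ) : ℝ) - ((z₀ : ℤ) : ℝ)) / (m : ℝ)) with ha
    have hline : ∀ m ∈ (g i).support,
        ((a * (m : ℝ) + ((z₀ : ℤ) : ℝ) : ℝ) : EReal) ≤ evv v ((g i).coeff m) := by
      intro m hm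
      rw [hFv m hm]
      rcases Nat.eq_zero_or_pos m with rfl | hm0
      · have : a * ((0:ℕ) : ℝ) + ((z₀ : ℤ) : ℝ) = ((F 0 : ℤ) : ℝ) := by
          rw [hF0]; push_cast; ring
        rw [this]
      · have hle : a ≤ (((F m : ℤ) : ℝ) - ((z₀ : ℤ) : ℝ)) / (m : ℝ) := by
          refine le_trans (Finset.inf'_le _ hm) ?_
          rw [if_neg (by omega)]
        have hmpos : (0:ℝ) < (m : ℝ) := by exact_mod_cast hm0
        have h2 : a * (m : ℝ) + ((z₀ : ℤ) : ℝ) ≤ ((F m : ℤ) : ℝ) := by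
          have := (le_div_iff₀ hmpos).1 hle
          linarith
        exact_mod_cast h2
    have hNP0 : (((z₀ : ℤ) : ℝ) : EReal) ≤ NP v (g i) 0 := by
      apply le_sSup
      refine ⟨a, ((z₀ : ℤ) : ℝ), hline, ?_⟩
      norm_num
    have hNPj : NP v (g i) (j : ℝ) ≤ (((F j : ℤ) : ℝ) : EReal) := by
      apply sSup_le
      rintro y ⟨A, B, hAB, rfl⟩
      rw [← hFv j hjsup]
      exact hAB j hjsup
    have hlt : NP v (g i) 0 < NP v (g i) (j : ℝ) :=
      hstrict 0 (j : ℝ) le_rfl (by exact_mod_cast hj1) (by exact_mod_cast hjd)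
    have hEE : (((z₀ : ℤ) : ℝ) : EReal) < (((F j : ℤ) : ℝ) : EReal) :=
      lt_of_le_of_lt hNP0 (lt_of_lt_of_le hlt hNPj)
    have hzz : z₀ < zj := by
      rw [hFj] at hEE
      exact_mod_cast hEE
    exact_mod_cast (by omega : z₀ + 1 ≤ zj)
  have hw : ∀ (i) (j : ℕ), ((1 : ℤ) : WithTop ℤ) ≤ v ((w i).coeff j) := by
    intro i j
    have hcw : (w i).coeff j = -(((g i).coeff 0)⁻¹ * (g i).coeff (j+1)) := by
      show (-(C ((g i).coeff 0)⁻¹ * (g i).divX)).coeff j = _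
      rw [coeff_neg, coeff_C_mul, coeff_divX]
    rw [hcw, vneg, hmul]
    obtain ⟨ha0, _⟩ := hpos i
    cases hz0 : v ((g i).coeff 0) with
    | top => exact absurd ((hv0 _).1 hz0) ha0
    | coe z₀ =>
    rw [vinv _ ha0 z₀ hz0]
    by_cases hjd : j + 1 ≤ d i
    · have hNPj := hNP i (j+1) (by omega) hjd
      rw [hz0] at hNPj
      cases hzj : v ((g i).coeff (j+1)) with
      | top => simp
      | coe zj =>
        rw [hzj] at hNPj
        have h1 : z₀ + 1 ≤ zj := by exact_mod_cast hNPj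
        exact_mod_cast (by omega : (1:ℤ) ≤ -z₀ + zj)
    · have hc0 : (g i).coeff (j+1) = 0 := by
        refine coeff_eq_zero_of_natDegree_lt ?_
        have : d i = (g i).natDegree := rfl
        omega
      rw [hc0, hv0']
      simp
  -- the coordinate estimate machinery
  let Pw : ℤ → M → Prop := fun t m => ∃ f : ιt → L,
    (∀ β, (t : WithTop ℤ) ≤ v (f β)) ∧ m = ∑ β : ιt, f β • c β
  have Pwmono : ∀ (t t' : ℤ) (m : M), t' ≤ t → Pw t m → Pw t' m := by
    rintro t t' m htt ⟨f, hf, hm⟩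
    exact ⟨f, fun β => le_trans (by exact_mod_cast htt) (hf β), hm⟩
  have hcoords : ∀ (u : ℤ) (ms : ιt → M), (∀ β, Pw u (ms β)) →
      ∀ (t : ℤ) (f : ιt → L), (∀ β, (t : WithTop ℤ) ≤ v (f β)) →
      Pw (t + u) (∑ β : ιt, f β • ms β) := by
    intro u ms hms t f hf
    choose h hh1 hh2 using hms
    refine ⟨fun γ => ∑ β : ιt, f β * h β γ, fun γ => ?_, ?_⟩
    · refine v_sum_le v hv0' hadd _ _ _ fun β _ => ?_
      rw [hmul]
      calc ((t + u : ℤ) : WithTop ℤ) = ((t : ℤ) : WithTop ℤ) + ((u : ℤ) : WithTop ℤ) := by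
            push_cast; rfl
        _ ≤ v (f β) + v (h β γ) := add_le_add (hf β) (hh1 β γ)
    · calc ∑ β : ιt, f β • ms β = ∑ β : ιt, ∑ γ : ιt, (f β * h β γ) • c γ := by
            refine Finset.sum_congr rfl fun β _ => ?_
            rw [hh2 β, Finset.smul_sum]
            exact Finset.sum_congr rfl fun γ _ => smul_smul _ _ _
        _ = ∑ γ : ιt, (∑ β : ιt, f β * h β γ) • c γ := by
            rw [Finset.sum_comm]
            exact Finset.sum_congr rfl fun γ _ => (Finset.sum_smul).symm
  have hPwc : ∀ β : ιt, Pw 0 (c β) := by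
    intro β
    refine ⟨fun γ => if γ = β then 1 else 0, fun γ => ?_, ?_⟩
    · dsimp only
      by_cases h : γ = β
      · rw [if_pos h, v1]
      · rw [if_neg h, hv0']; exact le_top
    · rw [Finset.sum_eq_single_of_mem β (Finset.mem_univ β)
        (fun γ _ hγ => by dsimp only; rw [if_neg hγ, zero_smul])]
      dsimp only
      rw [if_pos rfl, one_smul]
  have hPwchat : ∀ i, Pw 1 (chat i) := by
    intro i
    have hwdeg : (w i).natDegree < d i := by
      have h1 : (w i).natDegree ≤ (g i).divX.natDegree := by
        show (-(C ((g i).coeff 0)⁻¹ * (g i).divX)).natDegree ≤ _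
        rw [natDegree_neg]
        exact natDegree_C_mul_le _ _
      have h2 : (g i).divX.natDegree ≤ (g i).natDegree - 1 :=
        natDegree_divX_eq_natDegree_tsub_one.le
      have h3 : 0 < (g i).natDegree := hdeg i
      have h4 : d i = (g i).natDegree := rfl
      omega
    have hkey := key i (w i) hwdeg
    refine ⟨fun γ => if γ.1 = i then (w i).coeff (γ.2 : ℕ) else 0, fun γ => ?_, ?_⟩
    · dsimp only
      by_cases h : γ.1 = i
      · rw [if_pos h]; exact hw i _
      · rw [if_neg h, hv0']; exact le_top
    · show chat i = _
      rw [show chat i = Φ i (w i) from rfl, hkey]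
      rw [← Finset.univ_sigma_univ, Finset.sum_sigma]
      rw [Finset.sum_eq_single_of_mem i (Finset.mem_univ i)]
      · refine (Finset.sum_congr rfl fun j _ => ?_).symm
        dsimp only
        rw [if_pos rfl]
      · intro i' _ hi'
        refine Finset.sum_eq_zero fun j _ => ?_
        dsimp only
        rw [if_neg hi', zero_smul]
  have hPwSc : ∀ β : ιt, Pw 0 (Teq.symm (c β)) := by
    rintro ⟨i, j⟩
    obtain ⟨jv, hjv⟩ := j
    cases jv with
    | zero =>
      show Pw 0 (Teq.symm (c' i 0))
      rw [hSchat]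
      exact Pwmono 1 0 _ (by omega) (hPwchat i)
    | succ j' =>
      show Pw 0 (Teq.symm (c' i (j' + 1)))
      rw [hSc']
      exact hPwc ⟨i, ⟨j', by omega⟩⟩
  have PwS : ∀ (t : ℤ) (m : M), Pw t m → Pw t (Teq.symm m) := by
    rintro t m ⟨f, hf, hm⟩
    have heq : Teq.symm m = ∑ β : ιt, f β • Teq.symm (c β) := by
      rw [hm, map_sum]
      exact Finset.sum_congr rfl fun β _ => map_smul _ _ _
    have h2 := hcoords 0 (fun β => Teq.symm (c β)) hPwSc t f hf
    rw [add_zero] at h2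
    rw [heq]
    exact h2
  have hpres : ∀ (t : ℤ) (n : ℕ) (m : M), Pw t m → Pw t (SL n m) := by
    intro t n
    induction n with
    | zero => intro m hm; rw [show ∀ m : M, SL 0 m = m from SLdef0]; exact hm
    | succ n ih =>
      intro m hm
      rw [SLsucc' n m]
      exact PwS t _ (ih m hm)
  have hstep : ∀ (i) (j : ℕ), j < d i → Pw 1 (SL (j+1) (c' i j)) := by
    intro i j
    induction j with
    | zero =>
      intro _
      have h1 : SL 1 (c' i 0) = Teq.symm (c' i 0) := by
        rw [SLsucc 0 (c' i 0), SLdef0]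
      rw [h1, hSchat]
      exact hPwchat i
    | succ j' ih =>
      intro hj
      rw [SLsucc (j'+1) (c' i (j'+1)), hSc']
      exact ih (by omega)
  obtain ⟨D, hD, hD1⟩ : ∃ D : ℕ, (∀ i, d i ≤ D) ∧ 1 ≤ D := by
    refine ⟨Finset.univ.sup d, fun i => Finset.le_sup (Finset.mem_univ i), ?_⟩
    exact le_trans (hdeg ⟨0, hk⟩) (Finset.le_sup (f := d) (Finset.mem_univ (⟨0, hk⟩ : Fin k)))
  have PwD : ∀ (t : ℤ) (m : M), Pw t m → Pw (t + 1) (SL D m) := by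
    rintro t m ⟨f, hf, hm⟩
    have hcβ : ∀ β : ιt, Pw 1 (SL D (c β)) := by
      rintro ⟨i, j⟩
      have hjd := j.isLt
      have hDi : (g i).natDegree ≤ D := hD i
      have hsplit : SL D (c ⟨i, j⟩) = SL (D - ((j:ℕ)+1)) (SL ((j:ℕ)+1) (c' i (j:ℕ))) := by
        have harith : D - ((j:ℕ)+1) + ((j:ℕ)+1) = D := by omega
        rw [← SLadd, harith]
      rw [hsplit]
      exact hpres 1 _ _ (hstep i (j:ℕ) hjd)
    have heq : SL D m = ∑ β : ιt, f β • SL D (c β) := by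
      rw [hm, map_sum]
      exact Finset.sum_congr rfl fun β _ => map_smul _ _ _
    rw [heq]
    exact hcoords 1 _ hcβ t f hf
  have grow : ∀ (m : M) (t₀ : ℤ), Pw t₀ m → ∀ n : ℕ, Pw (t₀ + ((n / D : ℕ) : ℤ)) (SL n m) := by
    intro m t₀ h0 n
    induction n using Nat.strong_induction_on with
    | _ n ih =>
      by_cases hnD : n < D
      · rw [Nat.div_eq_of_lt hnD, Nat.cast_zero, add_zero]
        exact hpres t₀ n m h0
      · push_neg at hnD
        have h1 : Pw (t₀ + (((n - D) / D : ℕ) : ℤ)) (SL (n - D) m) := ih (n - D) (by omega)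
        have h2 := PwD _ _ h1
        have h3 : SL D (SL (n - D) m) = SL n m := by
          have harith : D + (n - D) = n := by omega
          rw [← SLadd, harith]
        rw [h3] at h2
        have h4 : t₀ + (((n - D) / D : ℕ) : ℤ) + 1 = t₀ + ((n / D : ℕ) : ℤ) := by
          have h5 : n / D = (n - D) / D + 1 := Nat.div_eq_sub_div (by omega) hnD
          rw [h5]
          push_cast
          ring
        rwa [h4] at h2
  -- bounding constants from the lattice
  have claimA : ∀ m : M, ∃ A : ℤ, ∀ x : L, (A : WithTop ℤ) ≤ v x → x • m ∈ Λ := by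
    intro m
    obtain ⟨cB, hcB⟩ := exists_lb' Finset.univ (fun i : Fin nb => v (b.repr m i))
    refine ⟨-cB, fun x hx => ?_⟩
    have hm : m = ∑ i : Fin nb, b.repr m i • b i := (b.sum_repr m).symm
    rw [hm, Finset.smul_sum]
    refine Submodule.sum_mem _ fun i _ => ?_
    rw [smul_smul]
    refine smulΛ _ _ ?_ (hbΛ i)
    rw [hmul]
    have h1 := hcB i (Finset.mem_univ i)
    calc (0 : WithTop ℤ) = ((-cB : ℤ) : WithTop ℤ) + ((cB : ℤ) : WithTop ℤ) := by
          rw [← WithTop.coe_add]; norm_num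
      _ ≤ v x + v (b.repr m i) := add_le_add hx h1
  have hA : ∃ A : ℤ, ∀ (β : ιt) (x : L), (A : WithTop ℤ) ≤ v x → x • c β ∈ Λ := by
    choose Af hAf using fun β : ιt => claimA (c β)
    obtain ⟨A, hAub⟩ := exists_ub_int Finset.univ Af
    refine ⟨A, fun β x hx => hAf β x (le_trans ?_ hx)⟩
    exact_mod_cast hAub β (Finset.mem_univ β)
  obtain ⟨A, hAc⟩ := hA
  -- the per-element statement
  have hmain : ∀ m : M, ∃ N, ∀ n ≥ N, SL n m ∈ Λσ := by
    intro m
    obtain ⟨f0, hf0⟩ := (Submodule.mem_span_range_iff_exists_fun L).1 (hspan m)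
    obtain ⟨t₀, ht₀⟩ := exists_lb' Finset.univ (fun β : ιt => v (f0 β))
    have hPw0 : Pw t₀ m := ⟨f0, fun β => ht₀ β (Finset.mem_univ β), hf0.symm⟩
    set K := (A + 1 - t₀).toNat with hK
    refine ⟨D * (K + 1), fun n hn => ?_⟩
    have hdiv : K + 1 ≤ n / D :=
      (Nat.le_div_iff_mul_le (by omega)).2 (by rw [mul_comm]; exact hn)
    have hPwA : Pw (A + 1) (SL n m) := by
      refine Pwmono _ _ _ ?_ (grow m t₀ hPw0 n)
      have hKK : (A + 1 - t₀) ≤ (K : ℤ) := Int.self_le_toNat _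
      have h6 : (K : ℤ) + 1 ≤ ((n / D : ℕ) : ℤ) := by exact_mod_cast hdiv
      omega
    obtain ⟨f, hf, hfm⟩ := hPwA
    rw [memΛσ, hfm, Finset.smul_sum]
    refine Submodule.sum_mem _ fun β _ => ?_
    rw [smul_smul]
    refine hAc β _ ?_
    rw [hmul, vσinv]
    have h7 := hf β
    cases hvf : v (f β) with
    | top => simp
    | coe z =>
      rw [hvf] at h7
      have hz : A + 1 ≤ z := by exact_mod_cast h7
      exact_mod_cast (by omega : A ≤ -1 + z)
  -- assemble over the generators of Λ
  obtain ⟨gens, hgens⟩ := hfg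
  obtain ⟨N₀, hN₀⟩ := exists_uniform_N gens (fun m N => ∀ n ≥ N, SL n m ∈ Λσ)
    (fun m N N' hNN h n hn => h n (le_trans hNN hn)) (fun m _ => hmain m)
  refine ⟨N₀, fun n hn y hy => ?_⟩
  obtain ⟨m, hm, rfl⟩ := hy
  have hSLm : SL n m ∈ Λσ := by
    have hmem : m ∈ Submodule.span ↥O (gens : Set M) := by rw [hgens]; exact hm
    refine Submodule.span_induction (fun x hx => hN₀ x hx n hn) ?_ ?_ ?_ hmem
    · rw [map_zero]; exact Λσ.zero_mem
    · intro x y _ _ hx hy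
      rw [map_add]; exact Λσ.add_mem hx hy
    · intro o x _ hx
      have h8 : SL n (o • x) = o • SL n x := map_smul _ (o : L) x
      rw [h8]; exact Λσ.smul_mem o hx
  refine ⟨σ⁻¹ • SL n m, (memΛσ _).1 hSLm, ?_⟩
  show (X : Polynomial L) ^ n • (σ⁻¹ • SL n m) = σ⁻¹ • m
  rw [hcompat σ⁻¹ (SL n m), smul_smul, X_pow_mul, mul_smul, ← hcompat, hXSL n m]
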